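/- (Theorem 2, aggregate form.) Let ε > 0, T_Δ a positive natural number, M a natural number, ω_Q, ω_q ≥ 0, and α₀, β₀ > 0. Let S₁, S₂, S₃ be finite index sets each of cardinality at most M. For each j ∈ S₁ suppose given α_j ≥ α₀, P_j > 0, and reals c_j, ĉ_j with |c_j − ĉ_j| ≤ T_Δ·(ω_Q + ω_q); define p_j(c) := min(max(ε·c/(2·α_j), 0), P_j) and F_j(p, c) := (α_j/ε)·p² − c·p. For each j ∈ S₂ suppose given β_j ≥ β₀, L_j > 0, and reals c_j, ĉ_j with |c_j − ĉ_j| ≤ 2·T_Δ·ω_Q; define u_j(c) := min(max(ε·c/(2·β_j), 0), L_j) and G_j(u, c) := (β_j/ε)·u² − c·u. For each j ∈ S₃ suppose given β_j ≥ β₀, L_j > 0, and reals c_j, ĉ_j with |c_j − ĉ_j| ≤ T_Δ·(ω_Q + ω_q); define v_j and H_j analogously to u_j and G_j. Then |∑_{j∈S₁} F_j(p_j(ĉ_j), c_j) + ∑_{j∈S₂} G_j(u_j(ĉ_j), c_j) + ∑_{j∈S₃} H_j(v_j(ĉ_j), c_j) − ∑_{j∈S₁} F_j(p_j(c_j), c_j)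 − ∑_{j∈S₂} G_j(u_j(c_j), c_j) − ∑_{j∈S₃} H_j(v_j(c_j), c_j)| ≤ ε·T_Δ²·M·[(1/(2·α₀) + 1/(2·β₀))·(ω_Q + ω_q)² + (2/β₀)·ω_Q²]. -/

import Mathlib

/-- The quadratic queue-price objective `F(x, c) = (price/ε)·x² − c·x`. -/
noncomputable def qpObjective (price ε x c : ℝ) : ℝ := (price / ε) * x ^ 2 - c * x

/-- The clamped minimizer `x(c) = clamp(ε·c/(2·price); [0, cap])`. -/
noncomputable def qpMinimizer (price ε cap c : ℝ) : ℝ :=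
  min (max (ε * c / (2 * price)) 0) cap

lemma qp_min_le (price ε cap c y : ℝ) (hpr : 0 < price) (hε : 0 < ε)
    (hy0 : 0 ≤ y) (hyc : y ≤ cap) :
    qpObjective price ε (qpMinimizer price ε cap c) c ≤ qpObjective price ε y c := by
  have hcap : 0 ≤ cap := le_trans hy0 hyc
  unfold qpObjective qpMinimizer
  set m := ε * c / (2 * price) with hm
  have hcm : ε * c = 2 * price * m := by
    rw [hm]; field_simp [hpr.ne']
  have ha : 0 < price / ε := div_pos hpr hε
  have hpe : price / ε * ε = price := div_mul_cancel₀ _ hε.ne'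
  rcases le_total m 0 with h | h
  · rw [max_eq_right h, min_eq_left hcap]
    have hc0 : c ≤ 0 := by nlinarith
    nlinarith [sq_nonneg y]
  · rw [max_eq_left h]
    rcases le_total m cap with h2 | h2
    · rw [min_eq_left h2]
      nlinarith [sq_nonneg (y - m)]
    · rw [min_eq_right h2]
      have hc2 : c = price / ε * (2 * m) := by
        rw [div_mul_eq_mul_div, eq_div_iff hε.ne']; linarith
      nlinarith [hc2, mul_nonneg ha.le (sq_nonneg (y - cap)),
        mul_nonneg ha.le (mul_nonneg (sub_nonneg.mpr h2) (sub_nonneg.mpr hyc))]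

lemma qp_mem (price ε cap c : ℝ) (hcap : 0 ≤ cap) :
    0 ≤ qpMinimizer price ε cap c ∧ qpMinimizer price ε cap c ≤ cap := by
  unfold qpMinimizer
  exact ⟨le_min (le_max_right _ _) hcap, min_le_right _ _⟩

lemma qp_loss (price ε cap c chat δ p₀ : ℝ) (hp₀ : 0 < p₀) (hpr : p₀ ≤ price)
    (hε : 0 < ε) (hcap : 0 < cap) (hδ : |c - chat| ≤ δ) :
    |qpObjective price ε (qpMinimizer price ε cap chat) c
      - qpObjective price ε (qpMinimizer price ε cap c) c| ≤ ε * δ ^ 2 / (2 * p₀) := by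
  have hpr' : 0 < price := lt_of_lt_of_le hp₀ hpr
  have hδ0 : 0 ≤ δ := le_trans (abs_nonneg _) hδ
  set x := qpMinimizer price ε cap c with hx
  set xh := qpMinimizer price ε cap chat with hxh
  obtain ⟨hx0, hxc⟩ := qp_mem price ε cap c hcap.le
  obtain ⟨hxh0, hxhc⟩ := qp_mem price ε cap chat hcap.le
  -- lower bound: 0 ≤ diff
  have hlow := qp_min_le price ε cap c xh hpr' hε hxh0 hxhc
  rw [← hx] at hlow
  -- Lipschitz
  have hlip : |xh - x| ≤ ε * |chat - c| / (2 * price) := by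
    have h1 : |xh - x| ≤ |max (ε * chat / (2 * price)) 0 - max (ε * c / (2 * price)) 0| := by
      have := abs_min_sub_min_le_max (max (ε * chat / (2 * price)) 0) cap
        (max (ε * c / (2 * price)) 0) cap
      simpa [hx, hxh, qpMinimizer] using this
    have h2 : |max (ε * chat / (2 * price)) 0 - max (ε * c / (2 * price)) 0|
        ≤ |ε * chat / (2 * price) - ε * c / (2 * price)| := by
      have := abs_max_sub_max_le_max (ε * chat / (2 * price)) 0 (ε * c / (2 * price)) 0
      simpa using this
    calc |xh - x| ≤ |ε * chat / (2 * price) - ε * c / (2 * price)| := le_trans h1 h2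
      _ = ε * |chat - c| / (2 * price) := by
          rw [div_sub_div_same, ← mul_sub, abs_div, abs_mul, abs_of_pos hε,
            abs_of_pos (by positivity : (0:ℝ) < 2 * price)]
  -- decomposition: diff = (F(xh,chat) - F(x,chat)) + (c - chat) * (x - xh)
  have hdec : qpObjective price ε xh c - qpObjective price ε x c
      = (qpObjective price ε xh chat - qpObjective price ε x chat)
        + (c - chat) * (x - xh) := by
    unfold qpObjective; ring
  have hmid := qp_min_le price ε cap chat x hpr' hε hx0 hxc
  rw [← hxh] at hmid
  have hup : qpObjective price ε xh c - qpObjective price ε x c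
      ≤ ε * δ ^ 2 / (2 * p₀) := by
    rw [hdec]
    have h3 : (c - chat) * (x - xh) ≤ |c - chat| * |xh - x| := by
      calc (c - chat) * (x - xh) ≤ |(c - chat) * (x - xh)| := le_abs_self _
        _ = |c - chat| * |xh - x| := by rw [abs_mul, abs_sub_comm x xh]
    have h4 : |c - chat| * |xh - x| ≤ δ * (ε * δ / (2 * p₀)) := by
      have h5 : ε * |chat - c| / (2 * price) ≤ ε * δ / (2 * p₀) := by
        rw [abs_sub_comm] at hδ
        apply div_le_div₀ (by positivity) (by nlinarith [abs_nonneg (chat - c)])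
          (by positivity)
        nlinarith
      exact mul_le_mul hδ (le_trans hlip h5) (abs_nonneg _) hδ0
    have h6 : δ * (ε * δ / (2 * p₀)) = ε * δ ^ 2 / (2 * p₀) := by ring
    linarith
  rw [abs_le]
  constructor
  · have : 0 ≤ ε * δ ^ 2 / (2 * p₀) := by positivity
    linarith
  · exact hup

lemma sum_diff_bound {ι : Type*} (S : Finset ι) (f g : ι → ℝ) (B : ℝ)
    (h : ∀ j ∈ S, |f j - g j| ≤ B) :
    |∑ j ∈ S, f j - ∑ j ∈ S, g j| ≤ S.card * B := by
  rw [← Finset.sum_sub_distrib]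
  calc |∑ j ∈ S, (f j - g j)| ≤ ∑ j ∈ S, |f j - g j| := Finset.abs_sum_le_sum_abs _ _
    _ ≤ ∑ _j ∈ S, B := Finset.sum_le_sum h
    _ = S.card * B := by simp [mul_comm]

/-- Theorem 2 (aggregate form): the total optimality loss of the per-slot
decomposed objective `∑(f₁ + f₂ + f₃)`, when the queue backlogs used in the
decisions are replaced by their window-start approximations, is at most
`ε·C` with `C = TΔ²·M·[(1/(2α₀) + 1/(2β₀))·(ωQ + ωq)² + (2/β₀)·ωQ²]`. -/
theorem two_timescale_total_optimality_loss
    {ι₁ ι₂ ι₃ : Type*}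
    (ε : ℝ) (hε : 0 < ε)
    (TΔ : ℕ) (hTΔ : 0 < TΔ) (M : ℕ)
    (ωQ ωq : ℝ) (hωQ : 0 ≤ ωQ) (hωq : 0 ≤ ωq)
    (α₀ β₀ : ℝ) (hα₀ : 0 < α₀) (hβ₀ : 0 < β₀)
    (S₁ : Finset ι₁) (S₂ : Finset ι₂) (S₃ : Finset ι₃)
    (hS₁ : S₁.card ≤ M) (hS₂ : S₂.card ≤ M) (hS₃ : S₃.card ≤ M)
    (α : ι₁ → ℝ) (P : ι₁ → ℝ) (c₁ c₁hat : ι₁ → ℝ)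
    (hα : ∀ j ∈ S₁, α₀ ≤ α j) (hP : ∀ j ∈ S₁, 0 < P j)
    (hc₁ : ∀ j ∈ S₁, |c₁ j - c₁hat j| ≤ (TΔ : ℝ) * (ωQ + ωq))
    (β₂ : ι₂ → ℝ) (L₂ : ι₂ → ℝ) (c₂ c₂hat : ι₂ → ℝ)
    (hβ₂ : ∀ j ∈ S₂, β₀ ≤ β₂ j) (hL₂ : ∀ j ∈ S₂, 0 < L₂ j)
    (hc₂ : ∀ j ∈ S₂, |c₂ j - c₂hat j| ≤ 2 * (TΔ : ℝ) * ωQ)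
    (β₃ : ι₃ → ℝ) (L₃ : ι₃ → ℝ) (c₃ c₃hat : ι₃ → ℝ)
    (hβ₃ : ∀ j ∈ S₃, β₀ ≤ β₃ j) (hL₃ : ∀ j ∈ S₃, 0 < L₃ j)
    (hc₃ : ∀ j ∈ S₃, |c₃ j - c₃hat j| ≤ (TΔ : ℝ) * (ωQ + ωq)) :
    |(∑ j ∈ S₁, qpObjective (α j) ε (qpMinimizer (α j) ε (P j) (c₁hat j)) (c₁ j))
      + (∑ j ∈ S₂, qpObjective (β₂ j) ε (qpMinimizer (β₂ j) ε (L₂ j) (c₂hat j)) (c₂ j))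
      + (∑ j ∈ S₃, qpObjective (β₃ j) ε (qpMinimizer (β₃ j) ε (L₃ j) (c₃hat j)) (c₃ j))
      - (∑ j ∈ S₁, qpObjective (α j) ε (qpMinimizer (α j) ε (P j) (c₁ j)) (c₁ j))
      - (∑ j ∈ S₂, qpObjective (β₂ j) ε (qpMinimizer (β₂ j) ε (L₂ j) (c₂ j)) (c₂ j))
      - (∑ j ∈ S₃, qpObjective (β₃ j) ε (qpMinimizer (β₃ j) ε (L₃ j) (c₃ j)) (c₃ j))|
      ≤ ε * (TΔ : ℝ) ^ 2 * (M : ℝ)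
          * ((1 / (2 * α₀) + 1 / (2 * β₀)) * (ωQ + ωq) ^ 2 + (2 / β₀) * ωQ ^ 2) := by
  set B₁ := ε * ((TΔ : ℝ) * (ωQ + ωq)) ^ 2 / (2 * α₀) with hB₁
  set B₂ := ε * (2 * (TΔ : ℝ) * ωQ) ^ 2 / (2 * β₀) with hB₂
  set B₃ := ε * ((TΔ : ℝ) * (ωQ + ωq)) ^ 2 / (2 * β₀) with hB₃
  have hB₁0 : 0 ≤ B₁ := by positivity
  have hB₂0 : 0 ≤ B₂ := by positivity
  have hB₃0 : 0 ≤ B₃ := by positivity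
  have H₁ : |(∑ j ∈ S₁, qpObjective (α j) ε (qpMinimizer (α j) ε (P j) (c₁hat j)) (c₁ j))
      - ∑ j ∈ S₁, qpObjective (α j) ε (qpMinimizer (α j) ε (P j) (c₁ j)) (c₁ j)|
      ≤ S₁.card * B₁ :=
    sum_diff_bound S₁ _ _ B₁ (fun j hj =>
      qp_loss (α j) ε (P j) (c₁ j) (c₁hat j) _ α₀ hα₀ (hα j hj) hε (hP j hj) (hc₁ j hj))
  have H₂ : |(∑ j ∈ S₂, qpObjective (β₂ j) ε (qpMinimizer (β₂ j) ε (L₂ j) (c₂hat j)) (c₂ j))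
      - ∑ j ∈ S₂, qpObjective (β₂ j) ε (qpMinimizer (β₂ j) ε (L₂ j) (c₂ j)) (c₂ j)|
      ≤ S₂.card * B₂ :=
    sum_diff_bound S₂ _ _ B₂ (fun j hj =>
      qp_loss (β₂ j) ε (L₂ j) (c₂ j) (c₂hat j) _ β₀ hβ₀ (hβ₂ j hj) hε (hL₂ j hj) (hc₂ j hj))
  have H₃ : |(∑ j ∈ S₃, qpObjective (β₃ j) ε (qpMinimizer (β₃ j) ε (L₃ j) (c₃hat j)) (c₃ j))
      - ∑ j ∈ S₃, qpObjective (β₃ j) ε (qpMinimizer (β₃ j) ε (L₃ j) (c₃ j)) (c₃ j)|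
      ≤ S₃.card * B₃ :=
    sum_diff_bound S₃ _ _ B₃ (fun j hj =>
      qp_loss (β₃ j) ε (L₃ j) (c₃ j) (c₃hat j) _ β₀ hβ₀ (hβ₃ j hj) hε (hL₃ j hj) (hc₃ j hj))
  have hM₁ : (S₁.card : ℝ) * B₁ ≤ M * B₁ := by
    apply mul_le_mul_of_nonneg_right _ hB₁0; exact_mod_cast hS₁
  have hM₂ : (S₂.card : ℝ) * B₂ ≤ M * B₂ := by
    apply mul_le_mul_of_nonneg_right _ hB₂0; exact_mod_cast hS₂
  have hM₃ : (S₃.card : ℝ) * B₃ ≤ M * B₃ := by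
    apply mul_le_mul_of_nonneg_right _ hB₃0; exact_mod_cast hS₃
  have hfin : (M : ℝ) * B₁ + (M : ℝ) * B₂ + (M : ℝ) * B₃
      = ε * (TΔ : ℝ) ^ 2 * (M : ℝ)
          * ((1 / (2 * α₀) + 1 / (2 * β₀)) * (ωQ + ωq) ^ 2 + (2 / β₀) * ωQ ^ 2) := by
    rw [hB₁, hB₂, hB₃]
    field_simp
    ring
  calc |(∑ j ∈ S₁, qpObjective (α j) ε (qpMinimizer (α j) ε (P j) (c₁hat j)) (c₁ j))
      + (∑ j ∈ S₂, qpObjective (β₂ j) ε (qpMinimizer (β₂ j) ε (L₂ j) (c₂hat j)) (c₂ j))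
      + (∑ j ∈ S₃, qpObjective (β₃ j) ε (qpMinimizer (β₃ j) ε (L₃ j) (c₃hat j)) (c₃ j))
      - (∑ j ∈ S₁, qpObjective (α j) ε (qpMinimizer (α j) ε (P j) (c₁ j)) (c₁ j))
      - (∑ j ∈ S₂, qpObjective (β₂ j) ε (qpMinimizer (β₂ j) ε (L₂ j) (c₂ j)) (c₂ j))
      - (∑ j ∈ S₃, qpObjective (β₃ j) ε (qpMinimizer (β₃ j) ε (L₃ j) (c₃ j)) (c₃ j))|
      = |((∑ j ∈ S₁, qpObjective (α j) ε (qpMinimizer (α j) ε (P j) (c₁hat j)) (c₁ j))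
          - ∑ j ∈ S₁, qpObjective (α j) ε (qpMinimizer (α j) ε (P j) (c₁ j)) (c₁ j))
        + ((∑ j ∈ S₂, qpObjective (β₂ j) ε (qpMinimizer (β₂ j) ε (L₂ j) (c₂hat j)) (c₂ j))
          - ∑ j ∈ S₂, qpObjective (β₂ j) ε (qpMinimizer (β₂ j) ε (L₂ j) (c₂ j)) (c₂ j))
        + ((∑ j ∈ S₃, qpObjective (β₃ j) ε (qpMinimizer (β₃ j) ε (L₃ j) (c₃hat j)) (c₃ j))
          - ∑ j ∈ S₃, qpObjective (β₃ j) ε (qpMinimizer (β₃ j) ε (L₃ j) (c₃ j)) (c₃ j))| := by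
        ring_nf
    _ ≤ _ + _ + _ := abs_add_three _ _ _
    _ ≤ (M : ℝ) * B₁ + (M : ℝ) * B₂ + (M : ℝ) * B₃ := by
        gcongr <;> [exact le_trans H₁ hM₁; exact le_trans H₂ hM₂; exact le_trans H₃ hM₃]
    _ = _ := hfin
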